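/- An uncountable abelian group G of cardinality τ is free if and only if it admits a smooth decomposition {G_α : α < τ} such that G_0 is countable and free and G_{α+1}/G_α is countable and free for every α < τ. -/

import Mathlib

open Cardinal Ordinal Submodule

universe u



private theorem free_smooth_aux_span_range_coe_basis {G : Type u} [AddCommGroup G] (H : AddSubgroup G) {κ : Type*}
    (bH : Module.Basis κ ℤ H) :
    AddSubgroup.toIntSubmodule H ≤ span ℤ (Set.range (fun i => (bH i : G))) := by
  intro x hx
  have hx' : x ∈ H := hx
  have h1 : (Set.range fun i => (bH i : G)) = (H.subtype.toIntLinearMap) '' (Set.range bH) := by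
    rw [← Set.range_comp]; rfl
  rw [h1, ← Submodule.map_span, bH.span_eq]
  exact Submodule.mem_map.mpr ⟨⟨x, hx'⟩, trivial, rfl⟩





private theorem free_smooth_aux_fwd (G : Type u) [AddCommGroup G] (τ : Cardinal.{u})
    (hcard : Cardinal.mk G = τ) (huncount : Cardinal.aleph0 < τ) (hfree : Module.Free ℤ G) :
      ∃ F : Ordinal → AddSubgroup G,
        (∀ α β : Ordinal, α ≤ β → β < τ.ord → F α ≤ F β) ∧
        (∀ β : Ordinal, β < τ.ord → Order.IsSuccLimit β →
          F β = ⨆ α : {a : Ordinal // a < β}, F α.1) ∧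
        (⨆ α : {a : Ordinal // a < τ.ord}, F α.1) = ⊤ ∧
        Countable (F 0) ∧ Module.Free ℤ (F 0) ∧
        (∀ α : Ordinal, α < τ.ord →
          Countable ((F (α + 1)) ⧸ ((F α).addSubgroupOf (F (α + 1)))) ∧
          Module.Free ℤ ((F (α + 1)) ⧸ ((F α).addSubgroupOf (F (α + 1))))) := by
  classical
  set ι := Module.Free.ChooseBasisIndex ℤ G with hι
  let b : Module.Basis ι ℤ G := Module.Free.chooseBasis ℤ G
  have hmkG : #G = #(ι →₀ ℤ) := Cardinal.mk_congr b.repr.toEquiv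
  have hinf : Infinite ι := by
    by_contra h
    have hfin : Finite ι := not_infinite_iff_finite.mp h
    have : Countable (ι →₀ ℤ) := inferInstance
    have : #G ≤ ℵ₀ := hmkG ▸ Cardinal.mk_le_aleph0
    exact absurd (hcard ▸ this) (not_le.mpr huncount)
  have hmax : #(ι →₀ ℤ) = max #ι ℵ₀ := by
    have := Cardinal.mk_finsupp_lift_of_infinite ι ℤ
    simpa using this
  have hmkι : #ι = τ := by
    rcases max_cases #ι ℵ₀ with ⟨h1, _⟩ | ⟨h1, h2⟩
    · rw [← hcard, hmkG, hmax, h1]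
    · exfalso
      rw [← hcard, hmkG, hmax, h1] at huncount
      exact lt_irrefl _ huncount
  have hord : Order.IsSuccLimit τ.ord := Cardinal.isSuccLimit_ord huncount.le
  have hee : Nonempty (ι ≃ {a : Ordinal.{u} // a < τ.ord}) := by
    rw [← Cardinal.lift_mk_eq']
    have h3 : #{a : Ordinal.{u} // a < τ.ord} = Cardinal.lift.{u+1} τ := by
      have h := Cardinal.mk_Iio_ordinal τ.ord
      rw [Cardinal.card_ord] at h
      exact h
    rw [h3, Cardinal.lift_lift, hmkι]
  obtain ⟨e⟩ := hee
  set stage : ι → Ordinal.{u} := fun i => (e i).1 with hstage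
  have hstage_lt : ∀ i, stage i < τ.ord := fun i => (e i).2
  set S : Ordinal.{u} → Set ι := fun γ => {i | stage i < γ} with hS
  set F : Ordinal.{u} → AddSubgroup G :=
    fun γ => AddSubgroup.toIntSubmodule.symm (span ℤ (⇑b '' S γ)) with hF
  have hFmem : ∀ γ (x : G), x ∈ F γ ↔ ↑(b.repr x).support ⊆ S γ := by
    intro γ x
    rw [hF]
    constructor
    · intro hx
      have : x ∈ AddSubgroup.toIntSubmodule (F γ) := hx
      rw [hF, OrderIso.apply_symm_apply] at this
      exact (Module.Basis.mem_span_image b).mp this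
    · intro hx
      have : x ∈ AddSubgroup.toIntSubmodule (F γ) := by
        rw [hF, OrderIso.apply_symm_apply]
        exact (Module.Basis.mem_span_image b).mpr hx
      exact this
  refine ⟨F, ?_, ?_, ?_, ?_, ?_, ?_⟩
  · intro α β hab _
    intro x hx
    rw [hFmem] at hx ⊢
    exact hx.trans (fun i hi => lt_of_lt_of_le hi hab)
  · intro β _ hβ
    apply AddSubgroup.toIntSubmodule.injective
    rw [OrderIso.map_iSup]
    have h1 : AddSubgroup.toIntSubmodule (F β) = span ℤ (⇑b '' S β) := by
      rw [hF, OrderIso.apply_symm_apply]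
    have h2 : ∀ a : {a : Ordinal // a < β}, AddSubgroup.toIntSubmodule (F a.1)
        = span ℤ (⇑b '' S a.1) := by
      intro a; rw [hF, OrderIso.apply_symm_apply]
    have hset : S β = ⋃ a : {a : Ordinal // a < β}, S a.1 := by
      ext i
      simp only [Set.mem_iUnion, hS, Set.mem_setOf_eq]
      constructor
      · intro hi
        exact ⟨⟨stage i + 1, hβ.succ_lt hi⟩, lt_add_one _⟩
      · rintro ⟨a, ha⟩
        exact ha.trans a.2
    rw [h1]
    simp_rw [h2]
    rw [hset, Set.image_iUnion, Submodule.span_iUnion]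
  · apply AddSubgroup.toIntSubmodule.injective
    rw [OrderIso.map_iSup]
    rw [show AddSubgroup.toIntSubmodule (⊤ : AddSubgroup G) = ⊤ from rfl]
    have h2 : ∀ a : {a : Ordinal // a < τ.ord}, AddSubgroup.toIntSubmodule (F a.1)
        = span ℤ (⇑b '' S a.1) := by
      intro a; rw [hF, OrderIso.apply_symm_apply]
    simp_rw [h2]
    rw [← Submodule.span_iUnion, ← Set.image_iUnion]
    have : (⋃ a : {a : Ordinal // a < τ.ord}, S a.1) = Set.univ := by
      ext i
      simp only [Set.mem_iUnion, hS, Set.mem_setOf_eq, Set.mem_univ, iff_true]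
      exact ⟨⟨stage i + 1, hord.succ_lt (hstage_lt i)⟩, lt_add_one _⟩
    rw [this, Set.image_univ, Module.Basis.span_eq]
  · have : F 0 = ⊥ := by
      apply AddSubgroup.toIntSubmodule.injective
      rw [hF, OrderIso.apply_symm_apply, show AddSubgroup.toIntSubmodule (⊥ : AddSubgroup G) = ⊥ from rfl]
      have : S 0 = ∅ := by
        ext i; simp [hS, not_lt_zero]
      rw [this, Set.image_empty, Submodule.span_empty]
    rw [this]
    infer_instance
  · have : F 0 = ⊥ := by
      apply AddSubgroup.toIntSubmodule.injective
      rw [hF, OrderIso.apply_symm_apply, show AddSubgroup.toIntSubmodule (⊥ : AddSubgroup G) = ⊥ from rfl]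
      have : S 0 = ∅ := by
        ext i; simp [hS, not_lt_zero]
      rw [this, Set.image_empty, Submodule.span_empty]
    rw [this]
    infer_instance
  · intro α hα
    set iα : ι := e.symm ⟨α, hα⟩ with hiα
    have hstiα : stage iα = α := by
      simp only [hstage, hiα, Equiv.apply_symm_apply]
    have hjiα : ∀ j, stage j = α → j = iα := by
      intro j hj
      apply e.injective
      rw [hiα, Equiv.apply_symm_apply]
      exact Subtype.ext hj
    set ψ : (F (α + 1)) →+ ℤ :=
      ((b.coord iα).toAddMonoidHom).comp (AddSubgroup.subtype _) with hψ
    have hψ_apply : ∀ x : F (α + 1), ψ x = b.repr (x : G) iα := by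
      intro x
      simp [hψ, Module.Basis.coord_apply]
    have hker : ψ.ker = (F α).addSubgroupOf (F (α + 1)) := by
      ext x
      rw [AddMonoidHom.mem_ker, hψ_apply, AddSubgroup.mem_addSubgroupOf, hFmem]
      have hx : ↑(b.repr (x : G)).support ⊆ S (α + 1) := (hFmem _ _).mp x.2
      constructor
      · intro h0 j hj
        have hj1 : stage j < α + 1 := hx hj
        have hj2 : stage j ≤ α := by
          rwa [Ordinal.add_one_eq_succ, Order.lt_succ_iff] at hj1
        rcases lt_or_eq_of_le hj2 with h | h
        · exact h
        · exfalso
          have hje : j = iα := hjiα j h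
          rw [hje] at hj
          exact (Finsupp.mem_support_iff.mp hj) h0
      · intro h
        by_contra h0
        have : iα ∈ (b.repr (x : G)).support := Finsupp.mem_support_iff.mpr h0
        have : stage iα < α := h this
        rw [hstiα] at this
        exact lt_irrefl _ this
    have hbiα : b iα ∈ F (α + 1) := by
      rw [hFmem]
      intro j hj
      simp only [Module.Basis.repr_self] at hj
      have hji : j = iα := by
        by_contra hne
        exact hne (by simpa using hj)
      rw [hji]
      show stage iα < α + 1
      rw [hstiα]
      exact lt_add_one _
    have hsurj : Function.Surjective ψ := by
      intro n
      refine ⟨n • ⟨b iα, hbiα⟩, ?_⟩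
      rw [map_zsmul, hψ_apply]
      simp [Module.Basis.repr_self, _root_.smul_eq_mul]
    have hE : Nonempty (((F (α + 1)) ⧸ ((F α).addSubgroupOf (F (α + 1)))) ≃+ ℤ) := by
      rw [← hker]
      exact ⟨QuotientAddGroup.quotientKerEquivOfSurjective ψ hsurj⟩
    obtain ⟨E⟩ := hE
    constructor
    · exact Countable.of_equiv ℤ E.symm.toEquiv
    · exact Module.Free.of_equiv E.symm.toIntLinearEquiv
private theorem free_smooth_aux_rev (G : Type u) [AddCommGroup G] (τ : Cardinal.{u})
    (huncount : Cardinal.aleph0 < τ)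
    (F : Ordinal.{u} → AddSubgroup G)
    (hmono : ∀ α β : Ordinal, α ≤ β → β < τ.ord → F α ≤ F β)
    (hlim : ∀ β : Ordinal, β < τ.ord → Order.IsSuccLimit β →
      F β = ⨆ α : {a : Ordinal // a < β}, F α.1)
    (htop : (⨆ α : {a : Ordinal // a < τ.ord}, F α.1) = ⊤)
    (h0free : Module.Free ℤ (F 0))
    (hq : ∀ α : Ordinal, α < τ.ord →
      Module.Free ℤ ((F (α + 1)) ⧸ ((F α).addSubgroupOf (F (α + 1))))) :
    Module.Free ℤ G := by
  classical
  have hord : Order.IsSuccLimit τ.ord := Cardinal.isSuccLimit_ord huncount.le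
  set o := τ.ord with ho
  haveI := h0free
  set κ0 := Module.Free.ChooseBasisIndex ℤ (F 0) with hκ0
  let b0 : Module.Basis κ0 ℤ (F 0) := Module.Free.chooseBasis ℤ (F 0)
  set Idx := {a : Ordinal.{u} // a < o} with hIdx
  let Q : Idx → Type u := fun a => (F (a.1 + 1)) ⧸ ((F a.1).addSubgroupOf (F (a.1 + 1)))
  let κ : Idx → Type u := fun a => @Module.Free.ChooseBasisIndex ℤ (Q a) _ _ _ (hq a.1 a.2)
  let qb : ∀ a : Idx, Module.Basis (κ a) ℤ (Q a) := fun a =>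
    @Module.Free.chooseBasis ℤ (Q a) _ _ _ (hq a.1 a.2)
  let m : ∀ a : Idx, (F (a.1 + 1)) →+ Q a := fun a => QuotientAddGroup.mk' _
  have hmsurj : ∀ a : Idx, Function.Surjective (m a) := fun a =>
    QuotientAddGroup.mk'_surjective _
  let ℓ : ∀ a : Idx, κ a → F (a.1 + 1) := fun a i => (hmsurj a (qb a i)).choose
  have hℓ : ∀ a i, m a (ℓ a i) = qb a i := fun a i => (hmsurj a (qb a i)).choose_spec
  let v : ∀ a : Idx, κ a → G := fun a i => (ℓ a i : G)
  have hv_mem : ∀ a i, v a i ∈ F (a.1 + 1) := fun a i => (ℓ a i).2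
  let p : Ordinal.{u} → Submodule ℤ G := fun γ => AddSubgroup.toIntSubmodule (F γ)
  have hpmem : ∀ γ (x : G), x ∈ p γ ↔ x ∈ F γ := fun γ x => Iff.rfl
  -- the injective map from Q a into G ⧸ p a
  let f : ∀ a : Idx, (F (a.1 + 1)) →+ (G ⧸ p a.1) := fun a =>
    ((p a.1).mkQ.toAddMonoidHom).comp (F (a.1 + 1)).subtype
  have hf_apply : ∀ a (x : F (a.1 + 1)), f a x = Submodule.Quotient.mk (x : G) := fun a x => rfl
  have hfker : ∀ a : Idx, ((F a.1).addSubgroupOf (F (a.1 + 1))) ≤ (f a).ker := by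
    intro a x hx
    have hxm : (x : G) ∈ F a.1 := hx
    rw [AddMonoidHom.mem_ker, hf_apply]
    exact (Submodule.Quotient.mk_eq_zero _).mpr hxm
  let φ : ∀ a : Idx, Q a →+ (G ⧸ p a.1) := fun a => QuotientAddGroup.lift _ (f a) (hfker a)
  have hφm : ∀ a (x : F (a.1 + 1)), φ a (m a x) = f a x := fun a x =>
    QuotientAddGroup.lift_mk' _ _ x
  have hφinj : ∀ a : Idx, Function.Injective (φ a) := by
    intro a
    rw [injective_iff_map_eq_zero]
    intro q hqz
    obtain ⟨x, rfl⟩ := hmsurj a q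
    rw [hφm, hf_apply] at hqz
    have hxm : (x : G) ∈ F a.1 := (Submodule.Quotient.mk_eq_zero _).mp hqz
    have : x ∈ (F a.1).addSubgroupOf (F (a.1 + 1)) := hxm
    show QuotientAddGroup.mk' _ x = 0
    rw [QuotientAddGroup.mk'_apply]
    exact (QuotientAddGroup.eq_zero_iff x).mpr this
  have hindep : ∀ a : Idx, LinearIndependent ℤ (fun i => (p a.1).mkQ (v a i)) := by
    intro a
    have hcomp : (fun i => (p a.1).mkQ (v a i)) = ((φ a).toIntLinearMap) ∘ (qb a) := by
      funext i
      show (p a.1).mkQ (v a i) = φ a (qb a i)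
      rw [← hℓ a i, hφm, hf_apply]
      rfl
    rw [hcomp]
    exact ((qb a).linearIndependent).map' _ (LinearMap.ker_eq_bot.mpr (hφinj a))
  -- the global family
  let w : (κ0 ⊕ (Σ a : Idx, κ a)) → G := Sum.elim (fun i => (b0 i : G)) (fun x => v x.1 x.2)
  have hw_inl : ∀ i : κ0, w (Sum.inl i) = (b0 i : G) := fun i => rfl
  have hw_inr : ∀ x : Σ a : Idx, κ a, w (Sum.inr x) = v x.1 x.2 := fun x => rfl
  -- spanning
  have hspan : ∀ β, β < o → p β ≤ span ℤ (Set.range w) := by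
    intro β
    induction β using Ordinal.induction with
    | _ β IH =>
    intro hβ
    rcases Ordinal.zero_or_succ_or_isSuccLimit β with h0 | ⟨γ, hγeq⟩ | hl
    · subst h0
      refine le_trans (free_smooth_aux_span_range_coe_basis (F 0) b0) (Submodule.span_mono ?_)
      rintro x ⟨i, rfl⟩
      exact ⟨Sum.inl i, rfl⟩
    · rw [← Ordinal.add_one_eq_succ] at hγeq
      subst hγeq
      have hγ : γ < o := lt_trans (lt_add_one γ) hβ
      set a : Idx := ⟨γ, hγ⟩ with ha
      intro x hx
      have hxF : x ∈ F (γ + 1) := hx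
      set x' : F (a.1 + 1) := ⟨x, hxF⟩ with hx'
      have hmem : m a x' ∈ (⊤ : Submodule ℤ (Q a)) := trivial
      rw [← (qb a).span_eq] at hmem
      obtain ⟨c, hc⟩ := Finsupp.mem_span_range_iff_exists_finsupp.mp hmem
      set y : F (a.1 + 1) := c.sum fun i n => n • ℓ a i with hy
      have hmy : m a y = m a x' := by
        rw [hy, map_finsuppSum (m a)]
        rw [← hc]
        apply Finsupp.sum_congr
        intro i _
        rw [map_zsmul, hℓ]
      have hsub : ((x' - y : F (a.1 + 1)) : G) ∈ F a.1 := by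
        have h1 : m a (x' - y) = 0 := by rw [map_sub, hmy]; exact sub_self _
        have h2 : (x' - y) ∈ (F a.1).addSubgroupOf (F (a.1 + 1)) := by
          rw [← QuotientAddGroup.eq_zero_iff (x' - y)]
          exact h1
        exact (AddSubgroup.mem_addSubgroupOf).mp h2
      have hyspan : (y : G) ∈ span ℤ (Set.range w) := by
        have hyc : (y : G) = c.sum fun i n => n • v a i := by
          show ((F (a.1 + 1)).subtype y : G) = _
          rw [hy, map_finsuppSum ((F (a.1 + 1)).subtype)]
          apply Finsupp.sum_congr
          intro i _
          rw [map_zsmul]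
          rfl
        rw [hyc]
        apply Submodule.finsuppSum_mem
        intro i _
        exact Submodule.smul_mem _ _ (Submodule.subset_span ⟨Sum.inr ⟨a, i⟩, rfl⟩)
      have hxsub : (x - (y : G)) ∈ span ℤ (Set.range w) := by
        apply IH γ (lt_add_one γ) hγ
        show (x - (y : G)) ∈ F γ
        have : ((x' - y : F (a.1 + 1)) : G) = x - (y : G) := rfl
        rwa [this] at hsub
      have := Submodule.add_mem _ hxsub hyspan
      rwa [sub_add_cancel] at this
    · rw [show p β = AddSubgroup.toIntSubmodule (F β) from rfl, hlim β hβ hl,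
        OrderIso.map_iSup]
      exact iSup_le fun a => IH a.1 a.2 (lt_trans a.2 hβ)
  have htop' : (⊤ : Submodule ℤ G) ≤ span ℤ (Set.range w) := by
    rw [show (⊤ : Submodule ℤ G) = AddSubgroup.toIntSubmodule ⊤ from rfl, ← htop,
      OrderIso.map_iSup]
    exact iSup_le fun a => hspan a.1 a.2
  -- linear independence
  have hw0indep : LinearIndependent ℤ (fun i : κ0 => (b0 i : G)) :=
    b0.linearIndependent.map' ((F 0).subtype.toIntLinearMap)
      (LinearMap.ker_eq_bot.mpr Subtype.coe_injective)
  have hwindep : LinearIndependent ℤ w := by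
    rw [linearIndependent_iff'']
    suffices H : ∀ n (s : Finset (κ0 ⊕ (Σ a : Idx, κ a))) (g : κ0 ⊕ (Σ a : Idx, κ a) → ℤ),
        s.card = n → (∀ i ∉ s, g i = 0) → ∑ i ∈ s, g i • w i = 0 → ∀ i, g i = 0 by
      intro s g hg hsum i
      exact H s.card s g rfl hg hsum i
    intro n
    induction n using Nat.strong_induction_on with
    | _ n IHn =>
    intro s g hcard hg hsum
    by_cases hs2 : ∃ x : Σ a : Idx, κ a, Sum.inr x ∈ s
    · -- there is a successor-stage element; kill the top stage
      obtain ⟨x0, hx0⟩ := hs2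
      set stI : (κ0 ⊕ (Σ a : Idx, κ a)) → Ordinal.{u} :=
        Sum.elim (fun _ => 0) (fun x => x.1.1) with hstI
      set T := s.image stI with hT
      have hTne : T.Nonempty := ⟨stI (Sum.inr x0), Finset.mem_image_of_mem _ hx0⟩
      set α := T.max' hTne with hα
      have hle : ∀ x : Σ a : Idx, κ a, Sum.inr x ∈ s → x.1.1 ≤ α := by
        intro x hx
        have := Finset.le_max' T (stI (Sum.inr x)) (Finset.mem_image_of_mem stI hx)
        simpa [hstI] using this
      have hattain : ∃ x : Σ a : Idx, κ a, Sum.inr x ∈ s ∧ x.1.1 = α := by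
        obtain ⟨i, his, hieq⟩ := Finset.mem_image.mp (T.max'_mem hTne)
        rcases i with i | x
        · refine ⟨x0, hx0, le_antisymm (hle x0 hx0) ?_⟩
          rw [hα, ← hieq]
          exact zero_le
        · exact ⟨x, his, hieq⟩
      obtain ⟨xa, hxas, hxaeq⟩ := hattain
      have hαlt : α < o := hxaeq ▸ xa.1.2
      set a : Idx := ⟨α, hαlt⟩ with haa
      set P : (κ0 ⊕ (Σ a : Idx, κ a)) → Prop := fun i => ∃ j : κ a, i = Sum.inr ⟨a, j⟩ with hP
      set s₂ := s.filter P with hs₂def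
      have hxa2 : Sum.inr xa ∈ s₂ := by
        rw [hs₂def, Finset.mem_filter]
        refine ⟨hxas, ?_⟩
        rcases xa with ⟨a', j⟩
        have haa' : a' = a := Subtype.ext hxaeq
        subst haa'
        exact ⟨j, rfl⟩
      have hdie : ∀ i ∈ s, i ∉ s₂ → (p α).mkQ (w i) = 0 := by
        intro i his hins₂
        have hnP : ¬ P i := fun h => hins₂ (Finset.mem_filter.mpr ⟨his, h⟩)
        have hzero : w i ∈ F α := by
          rcases i with i | x
          · exact hmono 0 α zero_le hαlt (b0 i).2
          · rcases x with ⟨a', j⟩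
            have hne : a' ≠ a := by
              intro h
              subst h
              exact hnP ⟨j, rfl⟩
            have hlt : a'.1 < α := lt_of_le_of_ne (hle ⟨a', j⟩ his)
              (fun h => hne (Subtype.ext h))
            have h1 : a'.1 + 1 ≤ α := Order.add_one_le_iff.mpr hlt
            exact hmono (a'.1 + 1) α h1 hαlt (hv_mem a' j)
        rw [Submodule.mkQ_apply]
        exact (Submodule.Quotient.mk_eq_zero _).mpr hzero
      have hq0 : ∑ i ∈ s, g i • (p α).mkQ (w i) = 0 := by
        have h1 := congrArg (p α).mkQ hsum
        rw [map_sum] at h1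
        simp_rw [map_zsmul] at h1
        simpa using h1
      have hq2 : ∑ i ∈ s₂, g i • (p α).mkQ (w i) = 0 := by
        rw [Finset.sum_subset (Finset.filter_subset _ _)]
        · exact hq0
        · intro i his hins₂
          rw [hdie i his hins₂, smul_zero]
      set emb : κ a → (κ0 ⊕ (Σ a : Idx, κ a)) := fun j => Sum.inr ⟨a, j⟩ with hemb
      have hembinj : Function.Injective emb := by
        intro j j' h
        simpa [hemb] using h
      have hinjOn : Set.InjOn emb (emb ⁻¹' ↑s₂) := fun x _ y _ h => hembinj h
      have hcond : ∀ i ∈ s₂, i ∉ Set.range emb → g i • (p α).mkQ (w i) = 0 := by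
        intro i hi hnr
        exfalso
        have hPi : P i := (Finset.mem_filter.mp hi).2
        obtain ⟨j, rfl⟩ := hPi
        exact hnr ⟨j, rfl⟩
      have hsum2 : ∑ j ∈ s₂.preimage emb hinjOn, g (emb j) • (p α).mkQ (w (emb j)) = 0 := by
        have h2 := Finset.sum_preimage emb s₂ hinjOn (fun i => g i • (p α).mkQ (w i)) hcond
        rw [h2]
        exact hq2
      have hvan : ∀ j ∉ s₂.preimage emb hinjOn, g (emb j) = 0 := by
        intro j hj
        have hnotmem : emb j ∉ s₂ := fun h => hj (Finset.mem_preimage.mpr h)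
        have hnots : emb j ∉ s := by
          intro h
          exact hnotmem (Finset.mem_filter.mpr ⟨h, ⟨j, rfl⟩⟩)
        exact hg _ hnots
      have hz2 := linearIndependent_iff''.mp (hindep a) (s₂.preimage emb hinjOn)
        (fun j => g (emb j)) hvan hsum2
      have hgs₂ : ∀ i ∈ s₂, g i = 0 := by
        intro i hi
        have hPi : P i := (Finset.mem_filter.mp hi).2
        obtain ⟨j, rfl⟩ := hPi
        exact hz2 j
      have hssub : s \ s₂ ⊂ s :=
        Finset.sdiff_ssubset (Finset.filter_subset _ _) ⟨_, hxa2⟩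
      have hcard' : (s \ s₂).card < n := hcard ▸ Finset.card_lt_card hssub
      have hsum' : ∑ i ∈ s \ s₂, g i • w i = 0 := by
        rw [Finset.sum_subset Finset.sdiff_subset]
        · exact hsum
        · intro i his hnot
          have hi2 : i ∈ s₂ := by
            by_contra h
            exact hnot (Finset.mem_sdiff.mpr ⟨his, h⟩)
          rw [hgs₂ i hi2, zero_smul]
      refine IHn _ hcard' (s \ s₂) g rfl ?_ hsum'
      intro i hi
      by_cases h : i ∈ s₂
      · exact hgs₂ i h
      · exact hg i (fun hcon => hi (Finset.mem_sdiff.mpr ⟨hcon, h⟩))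
    · -- all indices come from the base
      set f0 : κ0 → (κ0 ⊕ (Σ a : Idx, κ a)) := Sum.inl with hf0
      have hinj : Set.InjOn f0 (f0 ⁻¹' ↑s) := fun x _ y _ h => Sum.inl.inj h
      have hcond0 : ∀ i ∈ s, i ∉ Set.range f0 → g i • w i = 0 := by
        intro i his hnr
        exfalso
        rcases i with i | x
        · exact hnr ⟨i, rfl⟩
        · exact hs2 ⟨x, his⟩
      have hsum0 : ∑ j ∈ s.preimage f0 hinj, g (f0 j) • w (f0 j) = 0 := by
        have h2 := Finset.sum_preimage f0 s hinj (fun i => g i • w i) hcond0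
        rw [h2]
        exact hsum
      have hz := linearIndependent_iff''.mp hw0indep (s.preimage f0 hinj)
        (fun j => g (f0 j))
        (fun j hj => hg _ (fun hmem => hj (Finset.mem_preimage.mpr hmem))) hsum0
      intro i
      rcases i with i | x
      · exact hz i
      · exact hg _ (fun hmem => hs2 ⟨x, hmem⟩)
  exact Module.Free.of_basis (Module.Basis.mk hwindep htop')
set_option maxHeartbeats 1000000 in
/-- An uncountable abelian group `G` of cardinality `τ` is free iff it admits a
smooth decomposition `{G_α : α < τ}` with `G_0` countable and free and all
successive quotients `G_{α+1}/G_α` countable and free. -/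
theorem free_iff_smooth_decomposition_countable_free
    (G : Type*) [AddCommGroup G] (τ : Cardinal)
    (hcard : Cardinal.mk G = τ) (huncount : Cardinal.aleph0 < τ) :
    Module.Free ℤ G ↔
      ∃ F : Ordinal → AddSubgroup G,
        (∀ α β : Ordinal, α ≤ β → β < τ.ord → F α ≤ F β) ∧
        (∀ β : Ordinal, β < τ.ord → Order.IsSuccLimit β →
          F β = ⨆ α : {a : Ordinal // a < β}, F α.1) ∧
        (⨆ α : {a : Ordinal // a < τ.ord}, F α.1) = ⊤ ∧
        Countable (F 0) ∧ Module.Free ℤ (F 0) ∧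
        (∀ α : Ordinal, α < τ.ord →
          Countable ((F (α + 1)) ⧸ ((F α).addSubgroupOf (F (α + 1)))) ∧
          Module.Free ℤ ((F (α + 1)) ⧸ ((F α).addSubgroupOf (F (α + 1))))) := by
  constructor
  · intro hfree
    exact free_smooth_aux_fwd G τ hcard huncount hfree
  · rintro ⟨F, h1, h2, h3, _h4, h5, h6⟩
    exact free_smooth_aux_rev G τ huncount F h1 h2 h3 h5 (fun α hα => (h6 α hα).2)
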